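/- Let a = (a₁,...,a_k, 0,...,0, a_{k+m+1}) be a weak composition with positive integers a₁ ≥ ⋯ ≥ a_k, m ≥ 0 zeros, and 0 ≤ a_{k+m+1} ≤ a_k. Then the basic quasi-Yamanouchi Kohnert tableau of content a is the unique quasi-Yamanouchi Kohnert tableau of content a. -/

import Mathlib

/-- `b` dominates `a`: every partial sum of `b` is at least that of `a`. -/
def Dominates (b a : List ℕ) : Prop :=
  ∀ i : ℕ, (a.take i).sum ≤ (b.take i).sum

/-- `flatten a` removes the zero parts of a weak composition. -/
def Flatten (a : List ℕ) : List ℕ := a.filter (· != 0)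

/-- `β` refines `α`: `β` decomposes into consecutive nonempty blocks whose sums give `α`. -/
def Refines (β α : List ℕ) : Prop :=
  ∃ L : List (List ℕ), (∀ l ∈ L, l ≠ []) ∧ L.flatten = β ∧ L.map List.sum = α

/-- The set of inversions of a composition: pairs `i < j` with `α i < α j`. -/
def invSet (α : List ℕ) : Finset (Fin α.length × Fin α.length) :=
  Finset.univ.filter fun p => p.1 < p.2 ∧ α.get p.1 < α.get p.2

/-- Kohnert tableau of content `a`, encoded as a filling `T : (row, col) → entry`,
with `0` meaning an empty position, rows and columns indexed from `1`. -/
def IsKohnert (a : List ℕ) (T : ℕ × ℕ → ℕ) : Prop :=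
  -- cells live at positive coordinates
  (∀ r c, T (r, c) ≠ 0 → 1 ≤ r ∧ 1 ≤ c) ∧
  -- entries are among 1,…,ℓ
  (∀ r c, T (r, c) ≠ 0 → 1 ≤ T (r, c) ∧ T (r, c) ≤ a.length) ∧
  -- (i) for each i there is exactly one i in each column 1,…,aᵢ and none beyond
  (∀ i, 1 ≤ i → i ≤ a.length → ∀ c, 1 ≤ c →
    (c ≤ a.getD (i - 1) 0 → ∃! r, T (r, c) = i) ∧
    (a.getD (i - 1) 0 < c → ∀ r, T (r, c) ≠ i)) ∧
  -- (ii) each entry in row r is at least r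
  (∀ r c, T (r, c) ≠ 0 → r ≤ T (r, c)) ∧
  -- (iii) the cells filled with a given entry weakly descend from left to right
  (∀ r c r' c', T (r, c) ≠ 0 → T (r, c) = T (r', c') → c < c' → r' ≤ r) ∧
  -- (iv) if i < j share a column with i above j, there is an i in the next column,
  -- strictly above the cell containing j
  (∀ r r' c, T (r, c) ≠ 0 → T (r', c) ≠ 0 → T (r, c) < T (r', c) → r' < r →
    ∃ r'', r' < r'' ∧ T (r'', c + 1) = T (r, c))

/-- Quasi-Yamanouchi Kohnert tableau: additionally (v) every nonempty row `r` contains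
the entry `r`, or has a cell in row `r+1` weakly right of one of its cells. -/
def IsQYKohnert (a : List ℕ) (T : ℕ × ℕ → ℕ) : Prop :=
  IsKohnert a T ∧
  ∀ r, 1 ≤ r → (∃ c, T (r, c) ≠ 0) →
    ((∃ c, T (r, c) = r) ∨ ∃ c c', T (r, c) ≠ 0 ∧ T (r + 1, c') ≠ 0 ∧ c ≤ c')

/-- The weight of a filling: the list recording the number of cells in each row `1,…,ℓ`. -/
def wtList (a : List ℕ) (T : ℕ × ℕ → ℕ) : List ℕ :=
  (List.range a.length).map fun r =>
    ((Finset.Icc 1 a.sum).filter fun c => T (r + 1, c) ≠ 0).card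

open Classical in
/-- Coefficient of the monomial `x^b` in the fundamental slide polynomial `𝔉_a`. -/
noncomputable def fundCoeff (a b : List ℕ) : ℕ :=
  if b.length = a.length ∧ Dominates b a ∧ Refines (Flatten b) (Flatten a) then 1 else 0

/-- Coefficient of the monomial `x^b` in the key polynomial `κ_a`:
the number of Kohnert tableaux of content `a` and weight `b`. -/
noncomputable def keyCoeff (a b : List ℕ) : ℕ :=
  Set.ncard {T : ℕ × ℕ → ℕ | IsKohnert a T ∧ wtList a T = b}

/-- The basic filling of content `a`: `aᵢ` cells filled with `i` in row `i`, columns `1,…,aᵢ`. -/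
def basicFilling (a : List ℕ) : ℕ × ℕ → ℕ := fun p =>
  if 1 ≤ p.1 ∧ p.1 ≤ a.length ∧ 1 ≤ p.2 ∧ p.2 ≤ a.getD (p.1 - 1) 0 then p.1 else 0

/-- `κ_α` is multiplicity free in the fundamental slide basis: quasi-Yamanouchi
Kohnert tableaux of content `α` have pairwise distinct weights. -/
def MultFree (α : List ℕ) : Prop :=
  ∀ T₁ T₂ : ℕ × ℕ → ℕ, IsQYKohnert α T₁ → IsQYKohnert α T₂ →
    wtList α T₁ = wtList α T₂ → T₁ = T₂

/-- for `a = (a₁,…,a_k, 0,…,0, z)` with `a₁ ≥ ⋯ ≥ a_k > 0` and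
`z ≤ a_k`, the basic filling is the unique quasi-Yamanouchi Kohnert tableau
of content `a`. -/
theorem stmt10 (β : List ℕ) (m z : ℕ) (hβ : β ≠ []) (hpos : ∀ x ∈ β, 0 < x)
    (hsort : List.Pairwise (· ≥ ·) β) (hz : z ≤ β.getLast hβ)
    (a : List ℕ) (ha : a = β ++ List.replicate m 0 ++ [z]) :
    IsQYKohnert a (basicFilling a) ∧
    ∀ T : ℕ × ℕ → ℕ, IsQYKohnert a T → T = basicFilling a := by
  have hk0 : 0 < β.length := List.length_pos_iff.mpr hβ
  set k := β.length with hkdef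
  have hlen : a.length = k + m + 1 := by simp [ha]; omega
  have hAβ : ∀ i, i < k → a.getD i 0 = β.getD i 0 := by
    intro i hi
    rw [ha, List.getD_append _ _ _ _ (by simp only [List.length_append, List.length_replicate]; omega),
        List.getD_append _ _ _ _ (by omega)]
  have hA0 : ∀ i, k ≤ i → i < k + m → a.getD i 0 = 0 := by
    intro i h1 h2
    rw [ha, List.getD_append _ _ _ _ (by simp only [List.length_append, List.length_replicate]; omega),
        List.getD_append_right _ _ _ _ (by omega)]
    rw [List.getD_eq_getElem (List.replicate m 0) 0 (by simp only [List.length_replicate]; omega)]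
    simp
  have hAz : a.getD (k + m) 0 = z := by
    rw [ha, List.getD_append_right _ _ _ _ (by simp only [List.length_append, List.length_replicate]; omega)]
    simp [← hkdef]
  -- monotonicity
  have hβmono : ∀ i j, i ≤ j → j < k → β.getD j 0 ≤ β.getD i 0 := by
    intro i j hij hj
    rw [List.getD_eq_getElem β 0 hj, List.getD_eq_getElem β 0 (lt_of_le_of_lt hij hj)]
    exact hsort.rel_get_of_le
      (show (⟨i, lt_of_le_of_lt hij hj⟩ : Fin β.length) ≤ ⟨j, hj⟩ from Fin.mk_le_mk.mpr hij)
  have hβpos : ∀ i, i < k → 0 < β.getD i 0 := by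
    intro i hi
    rw [List.getD_eq_getElem β 0 hi]
    exact hpos _ (List.getElem_mem _)
  have hzβ : ∀ i, i < k → z ≤ β.getD i 0 := by
    intro i hi
    refine le_trans ?_ (hβmono i (k - 1) (by omega) (by omega))
    rw [List.getD_eq_getElem β 0 (by omega)]
    rw [List.getLast_eq_getElem hβ] at hz
    exact hz
  -- derived facts on a
  have hAmono : ∀ i j, i ≤ j → j < k → a.getD j 0 ≤ a.getD i 0 := by
    intro i j hij hj
    rw [hAβ i (lt_of_le_of_lt hij hj), hAβ j hj]; exact hβmono i j hij hj
  have hApos : ∀ i, i < k → 0 < a.getD i 0 := by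
    intro i hi; rw [hAβ i hi]; exact hβpos i hi
  have hzA : ∀ i, i < k → z ≤ a.getD i 0 := by
    intro i hi; rw [hAβ i hi]; exact hzβ i hi
  -- characterization of basicFilling
  have hbf : ∀ r c, basicFilling a (r, c) =
      if 1 ≤ r ∧ r ≤ a.length ∧ 1 ≤ c ∧ c ≤ a.getD (r - 1) 0 then r else 0 := by
    intro r c; rfl
  have hbfne : ∀ r c, basicFilling a (r, c) ≠ 0 ↔
      (1 ≤ r ∧ r ≤ a.length ∧ 1 ≤ c ∧ c ≤ a.getD (r - 1) 0) := by
    intro r c; rw [hbf]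
    constructor
    · intro h; by_contra hc; rw [if_neg hc] at h; exact h rfl
    · intro h; rw [if_pos h]; omega
  have hbfval : ∀ r c, basicFilling a (r, c) ≠ 0 → basicFilling a (r, c) = r := by
    intro r c h; rw [hbfne] at h; rw [hbf, if_pos h]
  -- basicFilling is a QY Kohnert tableau
  have hbasic : IsQYKohnert a (basicFilling a) := by
    refine ⟨⟨?_, ?_, ?_, ?_, ?_, ?_⟩, ?_⟩
    · intro r c h; rw [hbfne] at h; exact ⟨h.1, h.2.2.1⟩
    · intro r c h
      have h' := h; rw [hbfne] at h'
      rw [hbfval r c h]; exact ⟨h'.1, h'.2.1⟩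
    · intro i hi1 hi2 c hc1
      constructor
      · intro hc2
        refine ⟨i, ?_, ?_⟩
        · show basicFilling a (i, c) = i
          rw [hbf, if_pos ⟨hi1, hi2, hc1, hc2⟩]
        · intro r hr
          have hr' : basicFilling a (r, c) = i := hr
          have hne : basicFilling a (r, c) ≠ 0 := by rw [hr']; omega
          rw [hbfval r c hne] at hr'; omega
      · intro hc2 r hr
        have hne : basicFilling a (r, c) ≠ 0 := by rw [hr]; omega
        have := hbfval r c hne
        rw [this] at hr; subst hr
        rw [hbfne] at hne; omega
    · intro r c h; rw [hbfval r c h]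
    · intro r c r' c' h heq hcc
      have h' : basicFilling a (r', c') ≠ 0 := by rw [← heq]; exact h
      rw [hbfval r c h, hbfval r' c' h'] at heq; omega
    · intro r r' c h h' hlt hlt'
      rw [hbfval r c h, hbfval r' c h'] at hlt; omega
    · intro r hr ⟨c, hc⟩
      left
      rw [hbfne] at hc
      exact ⟨1, by rw [hbf, if_pos ⟨hc.1, hc.2.1, le_refl 1, le_trans hc.2.2.1 hc.2.2.2⟩]⟩
  refine ⟨hbasic, ?_⟩
  -- uniqueness
  intro T hT
  obtain ⟨⟨hpc, hrange, hcol, hrow, hdesc, hiv⟩, hqy⟩ := hT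
  -- entries 1..k sit in their own row
  have P : ∀ i, 1 ≤ i → i ≤ k → ∀ c, 1 ≤ c → c ≤ a.getD (i - 1) 0 → T (i, c) = i := by
    intro i
    induction i using Nat.strong_induction_on with
    | _ i ih =>
      intro hi1 hik c hc1 hc2
      obtain ⟨r, hr0, hru⟩ := (hcol i hi1 (by omega) c hc1).1 hc2
      have hr : T (r, c) = i := hr0
      have hne : T (r, c) ≠ 0 := by rw [hr]; omega
      have hri : r ≤ i := by have := hrow r c hne; omega
      have hr1 : 1 ≤ r := (hpc r c hne).1
      rcases eq_or_lt_of_le hri with he | hlt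
      · rw [← he]; rw [← he] at hr; exact hr
      · exfalso
        have hcr : c ≤ a.getD (r - 1) 0 :=
          le_trans hc2 (hAmono (r - 1) (i - 1) (by omega) (by omega))
        have := ih r hlt hr1 (by omega) c hc1 hcr
        rw [this] at hr; omega
  -- no entries strictly between k and k+m+1
  have hNoMid : ∀ r c j, T (r, c) = j → k < j → j < k + m + 1 → False := by
    intro r c j hj hj1 hj2
    have hne : T (r, c) ≠ 0 := by rw [hj]; omega
    have hc1 : 1 ≤ c := (hpc r c hne).2
    have h0 : a.getD (j - 1) 0 = 0 := hA0 (j - 1) (by omega) (by omega)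
    exact (hcol j (by omega) (by omega) c hc1).2 (by omega) r hj
  set L := k + m + 1 with hLdef
  -- column bound for top entry
  have hColZ : ∀ r c, T (r, c) = L → c ≤ z := by
    intro r c hrc
    have hne : T (r, c) ≠ 0 := by rw [hrc]; omega
    have hc1 : 1 ≤ c := (hpc r c hne).2
    by_contra hcz
    have h0 : a.getD (L - 1) 0 = z := by
      have : L - 1 = k + m := by omega
      rw [this, hAz]
    exact (hcol L (by omega) (by omega) c hc1).2 (by omega) r hrc
  -- top entry sits in row L
  have hTopRow : ∀ r c, T (r, c) = L → r = L := by
    intro r c hrc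
    have hne : T (r, c) ≠ 0 := by rw [hrc]; omega
    have hc1 : 1 ≤ c := (hpc r c hne).2
    have hr1 : 1 ≤ r := (hpc r c hne).1
    have hrL : r ≤ L := by have := hrow r c hne; omega
    have hcz : c ≤ z := hColZ r c hrc
    have hrk : k < r := by
      by_contra hle
      push_neg at hle
      have : T (r, c) = r := P r hr1 hle c hc1 (le_trans hcz (hzA (r - 1) (by omega)))
      omega
    by_contra hrne
    have hrmid : r < L := by omega
    -- row r is nonempty; apply quasi-Yamanouchi
    rcases hqy r hr1 ⟨c, hne⟩ with ⟨c', hc'⟩ | ⟨c1, c2, h1, h2, hle⟩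
    · exact hNoMid r c' r hc' hrk hrmid
    · -- both cells carry entry L
      have e1L : T (r, c1) = L := by
        have hb := hrange r c1 h1
        have hb2 := hrow r c1 h1
        by_contra hne1
        exact hNoMid r c1 (T (r, c1)) rfl (by omega) (by omega)
      have e2L : T (r + 1, c2) = L := by
        have hb := hrange (r + 1) c2 h2
        have hb2 := hrow (r + 1) c2 h2
        by_contra hne2
        exact hNoMid (r + 1) c2 (T (r + 1, c2)) rfl (by omega) (by omega)
      rcases eq_or_lt_of_le hle with heq | hlt
      · -- same column: two L's
        subst heq
        have hcz1 : c1 ≤ z := hColZ r c1 e1L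
        have hc11 : 1 ≤ c1 := (hpc r c1 h1).2
        obtain ⟨r', _, hru⟩ := (hcol L (by omega) (by omega) c1 hc11).1
          (by rw [show L - 1 = k + m by omega, hAz]; exact hcz1)
        have := hru r e1L
        have := hru (r + 1) e2L
        omega
      · -- c1 < c2: weak descent violated
        have := hdesc r c1 (r + 1) c2 h1 (by rw [e1L, e2L]) hlt
        omega
  -- entries ≤ k determine the row
  have hRowE : ∀ r c e, T (r, c) = e → 1 ≤ e → e ≤ k → r = e := by
    intro r c e hrc he1 hek
    have hne : T (r, c) ≠ 0 := by rw [hrc]; omega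
    have hc1 : 1 ≤ c := (hpc r c hne).2
    have hce : c ≤ a.getD (e - 1) 0 := by
      by_contra hgt
      exact (hcol e he1 (by omega) c hc1).2 (by omega) r hrc
    obtain ⟨r', _, hru⟩ := (hcol e he1 (by omega) c hc1).1 hce
    have h1 := hru r hrc
    have h2 := hru e (P e he1 hek c hc1 hce)
    omega
  -- conclude T = basicFilling a
  funext p
  obtain ⟨r, c⟩ := p
  by_cases h0 : T (r, c) = 0
  · rw [h0, hbf]
    split_ifs with hb
    · exfalso
      obtain ⟨hr1, hrL, hc1, hcA⟩ := hb
      rcases lt_trichotomy r k with hlt | heq | hgt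
      · have := P r hr1 (by omega) c hc1 hcA
        omega
      · have := P r hr1 (by omega) c hc1 hcA
        omega
      · rcases Nat.lt_or_ge r L with hmid | hge
        · have : a.getD (r - 1) 0 = 0 := hA0 (r - 1) (by omega) (by omega)
          omega
        · have hrL' : r = L := by rw [hlen] at hrL; omega
          subst hrL'
          have hcz : c ≤ z := by
            rw [show L - 1 = k + m by omega, hAz] at hcA; exact hcA
          obtain ⟨r', hr', hru⟩ := (hcol L (by omega) (by omega) c hc1).1
            (by rw [show L - 1 = k + m by omega, hAz]; exact hcz)
          have := hTopRow r' c hr'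
          subst this
          rw [h0] at hr'
          omega
    · rfl
  · have hb := hrange r c h0
    set e := T (r, c) with hedef
    have hce : c ≤ a.getD (e - 1) 0 := by
      have hc1 : 1 ≤ c := (hpc r c h0).2
      by_contra hgt
      exact (hcol e hb.1 hb.2 c hc1).2 (by omega) r hedef.symm
    have hc1 : 1 ≤ c := (hpc r c h0).2
    rcases Nat.lt_or_ge k e with hgt | hle
    · have heL : e = L := by
        by_contra hne
        exact hNoMid r c e hedef.symm hgt (by rw [hlen] at hb; omega)
      have hrL : r = L := hTopRow r c (by rw [← hedef, heL])
      rw [hbf, if_pos ⟨by omega, by omega, hc1, by rw [hrL]; rw [heL] at hce; exact hce⟩]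
      omega
    · have := hRowE r c e hedef.symm hb.1 hle
      rw [hbf, if_pos ⟨by omega, by rw [hlen]; omega, hc1, by rw [this]; exact hce⟩]
      omega
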